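/- Appending a sufficiently small dummy coordinate does not change 1.5-entmax: let s ∈ ℝ^d with p = 1.5-entmax(s), and let s' ∈ ℝ^{d+1} agree with s on the first d coordinates. If s'_{d+1}/2 ≤ s_[d]/2 − 1, where s_[d] = min_i s_i, then 1.5-entmax(s') equals p on the first d coordinates and assigns probability 0 to coordinate d+1. -/
import Mathlib

private lemma entmax_aux_lt {d : ℕ} (f : Fin d → ℝ) {a b : ℝ} (hab : a < b)
    (ha : ∑ i, (max (f i - a) 0) ^ 2 = 1)
    (hb : ∑ i, (max (f i - b) 0) ^ 2 = 1) : False := by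
  obtain ⟨i, hi⟩ : ∃ i : Fin d, max (f i - b) 0 ≠ 0 := by
    by_contra h
    push_neg at h
    have : ∑ i, (max (f i - b) 0) ^ 2 = 0 := by
      apply Finset.sum_eq_zero; intro i _; rw [h i]; ring
    rw [hb] at this; norm_num at this
  have hib : 0 < f i - b := by
    rcases lt_or_ge 0 (f i - b) with h | h
    · exact h
    · exact absurd (max_eq_right h) hi
  have hlt : ∑ j, (max (f j - b) 0) ^ 2 < ∑ j, (max (f j - a) 0) ^ 2 := by
    apply Finset.sum_lt_sum
    · intro j _
      have h1 : max (f j - b) 0 ≤ max (f j - a) 0 :=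
        max_le_max (by linarith) le_rfl
      exact pow_le_pow_left₀ (le_max_right _ _) h1 2
    · refine ⟨i, Finset.mem_univ i, ?_⟩
      have h1 : max (f i - b) 0 < max (f i - a) 0 := by
        rw [max_eq_left hib.le, max_eq_left (by linarith : (0:ℝ) ≤ f i - a)]
        linarith
      exact pow_lt_pow_left₀ h1 (le_max_right _ _) (by norm_num)
  rw [ha, hb] at hlt; exact lt_irrefl _ hlt

private lemma entmax_aux_eq {d : ℕ} (f : Fin d → ℝ) {a b : ℝ}
    (ha : ∑ i, (max (f i - a) 0) ^ 2 = 1)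
    (hb : ∑ i, (max (f i - b) 0) ^ 2 = 1) : a = b := by
  rcases lt_trichotomy a b with h | h | h
  · exact absurd (entmax_aux_lt f h ha hb) id
  · exact h
  · exact absurd (entmax_aux_lt f h hb ha) id

/-- Dummy padding: appending a coordinate `s'_{d+1}` with
`s'_{d+1}/2 ≤ min_i s_i / 2 − 1` does not change the 1.5-entmax output:
the first `d` probabilities are unchanged and the new coordinate gets probability 0. -/
theorem entmax_dummy_padding (d : ℕ) (hd : 0 < d) (s : Fin d → ℝ)
    (s' : Fin (d + 1) → ℝ) (hext : ∀ i : Fin d, s' i.castSucc = s i)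
    (hdummy : haveI : Nonempty (Fin d) := Fin.pos_iff_nonempty.mp hd
      s' (Fin.last d) / 2 ≤ (Finset.univ.inf' Finset.univ_nonempty s) / 2 - 1)
    (τ τ' : ℝ)
    (hτ : ∑ i, (max (s i / 2 - τ) 0) ^ 2 = 1)
    (hτ' : ∑ i, (max (s' i / 2 - τ') 0) ^ 2 = 1) :
    (∀ i : Fin d,
        (max (s' i.castSucc / 2 - τ') 0) ^ 2 = (max (s i / 2 - τ) 0) ^ 2) ∧
      (max (s' (Fin.last d) / 2 - τ') 0) ^ 2 = 0 := by
  haveI : Nonempty (Fin d) := Fin.pos_iff_nonempty.mp hd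
  -- each term of hτ' is ≤ 1
  have hterm : ∀ i : Fin (d+1), (max (s' i / 2 - τ') 0) ^ 2 ≤ 1 := by
    intro i
    rw [← hτ']
    exact Finset.single_le_sum (f := fun j => (max (s' j / 2 - τ') 0) ^ 2) (fun j _ => sq_nonneg _) (Finset.mem_univ i)
  have hle1 : ∀ i : Fin (d+1), s' i / 2 - τ' ≤ 1 := by
    intro i
    have h1 : max (s' i / 2 - τ') 0 ≤ 1 := by
      nlinarith [hterm i, le_max_right (s' i / 2 - τ') 0]
    exact le_trans (le_max_left _ _) h1
  -- find minimizer
  obtain ⟨i0, _, hi0⟩ := Finset.exists_mem_eq_inf' (Finset.univ_nonempty (α := Fin d)) s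
  have hmin : (Finset.univ.inf' Finset.univ_nonempty s) = s i0 := hi0
  have hτ'ge : (Finset.univ.inf' Finset.univ_nonempty s) / 2 - 1 ≤ τ' := by
    have := hle1 i0.castSucc
    rw [hext i0] at this
    rw [hmin]; linarith
  have hlast : max (s' (Fin.last d) / 2 - τ') 0 = 0 :=
    max_eq_right (by linarith)
  -- reduce hτ' to Fin d sum
  rw [Fin.sum_univ_castSucc, hlast] at hτ'
  have hτ'2 : ∑ i : Fin d, (max (s i / 2 - τ') 0) ^ 2 = 1 := by
    rw [← hτ']
    simp only [hext]
    ring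
  have heq : τ = τ' := entmax_aux_eq (fun i => s i / 2) hτ hτ'2
  constructor
  · intro i; rw [hext i, heq]
  · rw [hlast]; ring
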